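/- Let s ∈ ℝ², let ∂R ⊆ ℝ² be compact and nonempty, and let r_c ∈ ∂R attain the maximum of ‖r − s‖ over r ∈ ∂R. Let R_θ be the rotation by angle θ about s and v ∈ ℝ² a translation, and define T(p) = R_θ(p) + v (rotation about s then translation). Then for all p ∈ ∂R, ‖T(p) − p‖ ≤ 2·|sin(θ/2)|·‖r_c − s‖ + ‖v‖. -/

import Mathlib

open Complex in
lemma norm_exp_theta_I_sub_one (θ : ℝ) :
    ‖Complex.exp (θ * Complex.I) - 1‖ = 2 * |Real.sin (θ / 2)| := by
  have key : Complex.exp (θ * I) - 1 =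
      Complex.exp (((θ / 2 : ℝ) : ℂ) * I) * (2 * I * Complex.sin ((θ / 2 : ℝ) : ℂ)) := by
    rw [Complex.sin]
    have e1 : Complex.exp ((θ:ℂ) * I) =
        Complex.exp (((θ/2:ℝ):ℂ) * I) * Complex.exp (((θ/2:ℝ):ℂ) * I) := by
      rw [← Complex.exp_add]; push_cast; ring_nf
    have e2 : Complex.exp (((θ/2:ℝ):ℂ) * I) * Complex.exp (-(((θ/2:ℝ):ℂ)) * I) = 1 := by
      rw [← Complex.exp_add]; ring_nf; exact Complex.exp_zero
    linear_combination e1 + e2 +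
      (Complex.exp (((θ/2:ℝ):ℂ) * I) ^ 2 - Complex.exp (((θ/2:ℝ):ℂ) * I) *
        Complex.exp (-(((θ/2:ℝ):ℂ)) * I)) * Complex.I_sq
  rw [key, norm_mul, Complex.norm_exp_ofReal_mul_I, one_mul, norm_mul, norm_mul]
  simp only [Complex.norm_I, mul_one, Real.norm_eq_abs, ← Complex.ofReal_sin,
    Complex.norm_real]
  norm_num

open Complex in
theorem epa_displacement_bound
    (s v : ℂ) (θ : ℝ)
    (bR : Set ℂ) (hbR : IsCompact bR) (hne : bR.Nonempty)
    (rc : ℂ) (hrc : rc ∈ bR)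
    (hmax : ∀ r ∈ bR, ‖r - s‖ ≤ ‖rc - s‖)
    (T : ℂ → ℂ)
    (hT : ∀ p, T p = s + Complex.exp (θ * Complex.I) * (p - s) + v) :
    ∀ p ∈ bR, ‖T p - p‖ ≤ 2 * |Real.sin (θ / 2)| * ‖rc - s‖ + ‖v‖ := by
  intro p hp
  have h1 : T p - p = (Complex.exp (θ * Complex.I) - 1) * (p - s) + v := by
    rw [hT]; ring
  calc ‖T p - p‖ ≤ ‖(Complex.exp (θ * Complex.I) - 1) * (p - s)‖ + ‖v‖ := by
        rw [h1]; exact norm_add_le _ _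
    _ = 2 * |Real.sin (θ / 2)| * ‖p - s‖ + ‖v‖ := by
        rw [norm_mul, norm_exp_theta_I_sub_one]
    _ ≤ 2 * |Real.sin (θ / 2)| * ‖rc - s‖ + ‖v‖ := by
        have h2 := hmax p hp
        gcongr
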